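/- For every k > 0 with k_p = c_p k > 1, the elastic correlation data admits the lower bound M_EL(k) ≥ (|β_d|² c_p^{d+2−m}/d) k^{d−3−m} ‖Tr σ‖_{L¹(B₁)} − C₂ |β_d|² c_p^{d+1−m} k^{d−4−m}, where Tr σ denotes the pointwise trace of the matrix σ and ‖Tr σ‖_{L¹(B₁)} = ∫_{B₁} Tr σ(z) dz. -/

import Mathlib

open MeasureTheory

noncomputable section

/-- `ℝ^d` with the Euclidean structure. -/
abbrev EdE (d : ℕ) := EuclideanSpace ℝ (Fin d)

/-- `|β_d|² = 1/(8π)` for `d = 2` and `1/(16π²)` otherwise (`d = 3`). -/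
def betaSq (d : ℕ) : ℝ := if d = 2 then 1 / (8 * Real.pi) else 1 / (16 * Real.pi ^ 2)

/-- Frobenius norm of a `d×d` complex matrix. -/
def frobCd {d : ℕ} (A : Matrix (Fin d) (Fin d) ℂ) : ℝ :=
  Real.sqrt (∑ i, ∑ j, ‖A i j‖ ^ 2)

/-- The rank-one complex matrix `x ŷᵀ`, i.e. `(x yᵀ)_{ij} = x_i y_j`. -/
def outerC {d : ℕ} (x y : EdE d) : Matrix (Fin d) (Fin d) ℂ :=
  Matrix.of fun i j => (x i : ℂ) * (y j : ℂ)

/-- Entrywise Fourier transform `σ̂(γ) = ∫_{ℝ^d} σ(z) e^{−iγ·z} dz` of the matrix-valued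
strength. -/
def matHatD {d : ℕ} (σ : EdE d → Matrix (Fin d) (Fin d) ℝ) (γ : EdE d) :
    Matrix (Fin d) (Fin d) ℂ :=
  Matrix.of fun i j => ∫ z, (σ z i j : ℂ) * Complex.exp (-Complex.I * ((inner ℝ γ z : ℝ) : ℂ))

/-- Entrywise integral `∫_{B₁} r(z,ξ) e^{−iγ·z} dz` of the residual. -/
def rIntD {d : ℕ} (r : EdE d → EdE d → Matrix (Fin d) (Fin d) ℂ) (ξ γ : EdE d) :
    Matrix (Fin d) (Fin d) ℂ :=
  Matrix.of fun i j =>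
    ∫ z in Metric.ball (0 : EdE d) 1,
      r z ξ i j * Complex.exp (-Complex.I * ((inner ℝ γ z : ℝ) : ℂ))

/-- Correlation of the compressional far-field patterns of the stochastic elastic wave
equation. -/
def Fp (d : ℕ) (m cp : ℝ) (σ : EdE d → Matrix (Fin d) (Fin d) ℝ)
    (r : EdE d → EdE d → Matrix (Fin d) (Fin d) ℂ) (k : ℝ) (x y : EdE d) : ℝ :=
  betaSq d * frobCd
    (((cp ^ ((d : ℝ) + 2 - m) * k ^ ((d : ℝ) - 3 - m) : ℝ) : ℂ) •
        (outerC x x * matHatD σ ((cp * k) • (x + y)) * outerC y y) +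
      ((cp ^ ((d : ℝ) + 2) * k ^ ((d : ℝ) - 3) : ℝ) : ℂ) •
        (outerC x x * rIntD r (-((cp * k) • y)) ((cp * k) • (x + y)) * outerC y y))

/-- Correlation of the shear far-field patterns of the stochastic elastic wave
equation. -/
def Fs (d : ℕ) (m cs : ℝ) (σ : EdE d → Matrix (Fin d) (Fin d) ℝ)
    (r : EdE d → EdE d → Matrix (Fin d) (Fin d) ℂ) (k : ℝ) (x y : EdE d) : ℝ :=
  betaSq d * frobCd
    (((cs ^ ((d : ℝ) + 2 - m) * k ^ ((d : ℝ) - 3 - m) : ℝ) : ℂ) •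
        ((1 - outerC x x) * matHatD σ ((cs * k) • (x + y)) * (1 - outerC y y)) +
      ((cs ^ ((d : ℝ) + 2) * k ^ ((d : ℝ) - 3) : ℝ) : ℂ) •
        ((1 - outerC x x) * rIntD r (-((cs * k) • y)) ((cs * k) • (x + y)) * (1 - outerC y y)))

/-- `M_EL(k) = max{ sup_{x̂,ŷ} F_p(x̂,ŷ,k), sup_{x̂,ŷ} F_s(x̂,ŷ,k) }`. -/
def MEL (d : ℕ) (m cp cs : ℝ) (σ : EdE d → Matrix (Fin d) (Fin d) ℝ)
    (r : EdE d → EdE d → Matrix (Fin d) (Fin d) ℂ) (k : ℝ) : ℝ :=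
  max (sSup {v : ℝ | ∃ x y : EdE d, ‖x‖ = 1 ∧ ‖y‖ = 1 ∧ v = Fp d m cp σ r k x y})
    (sSup {v : ℝ | ∃ x y : EdE d, ‖x‖ = 1 ∧ ‖y‖ = 1 ∧ v = Fs d m cs σ r k x y})

end

section Aux

open Metric

attribute [local instance] Matrix.frobeniusSeminormedAddCommGroup Matrix.frobeniusNormedSpace

variable {d : ℕ}

lemma frobCd_eq_norm (A : Matrix (Fin d) (Fin d) ℂ) : frobCd A = ‖A‖ := by
  rw [Matrix.frobenius_norm_def, frobCd, Real.sqrt_eq_rpow]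
  congr 1
  refine Finset.sum_congr rfl fun i _ => Finset.sum_congr rfl fun j _ => ?_
  rw [Real.rpow_two]

lemma sqrt_sum_sq_le {ι : Type*} (s : Finset ι) (f : ι → ℝ) (hf : ∀ i ∈ s, 0 ≤ f i) :
    Real.sqrt (∑ i ∈ s, f i ^ 2) ≤ ∑ i ∈ s, f i := by
  have h1 : ∑ i ∈ s, f i ^ 2 ≤ (∑ i ∈ s, f i) ^ 2 := by
    rw [sq (∑ i ∈ s, f i), Finset.sum_mul]
    refine Finset.sum_le_sum fun i hi => ?_
    rw [sq]
    exact mul_le_mul_of_nonneg_left (Finset.single_le_sum hf hi) (hf i hi)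
  calc Real.sqrt (∑ i ∈ s, f i ^ 2) ≤ Real.sqrt ((∑ i ∈ s, f i) ^ 2) := Real.sqrt_le_sqrt h1
    _ = ∑ i ∈ s, f i := Real.sqrt_sq (Finset.sum_nonneg hf)

lemma frobCd_le_sum (A : Matrix (Fin d) (Fin d) ℂ) :
    frobCd A ≤ ∑ i, ∑ j, ‖A i j‖ := by
  rw [frobCd, ← Finset.sum_product', ← Finset.sum_product']
  exact sqrt_sum_sq_le _ _ fun p _ => norm_nonneg _

lemma abs_entry_le_frobCd (A : Matrix (Fin d) (Fin d) ℂ) (i j : Fin d) :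
    ‖A i j‖ ≤ frobCd A := by
  rw [frobCd, ← Real.sqrt_sq (norm_nonneg (A i j))]
  apply Real.sqrt_le_sqrt
  calc ‖A i j‖ ^ 2
      ≤ ∑ j', ‖A i j'‖ ^ 2 :=
        Finset.single_le_sum (f := fun j' => ‖A i j'‖ ^ 2)
          (fun _ _ => sq_nonneg _) (Finset.mem_univ j)
    _ ≤ ∑ i', ∑ j', ‖A i' j'‖ ^ 2 :=
        Finset.single_le_sum (f := fun i' => ∑ j', ‖A i' j'‖ ^ 2)
          (fun _ _ => Finset.sum_nonneg fun _ _ => sq_nonneg _) (Finset.mem_univ i)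

lemma psd_diag {M : Matrix (Fin d) (Fin d) ℝ} (h : M.PosSemidef) (i : Fin d) : 0 ≤ M i i := by
  exact h.diag_nonneg

-- |exp(-I t)| = 1 for real t
lemma abs_myexp (t : ℝ) : ‖Complex.exp (-Complex.I * (t : ℂ))‖ = 1 := by
  rw [Complex.norm_exp]
  simp [Complex.mul_re]

-- integrability of the frobenius norm of r on the ball
lemma frob_r_integrableOn (r : EdE d → EdE d → Matrix (Fin d) (Fin d) ℂ)
    (hr_int : ∀ ξ i j, Integrable (fun z => r z ξ i j)) (ξ : EdE d) :
    IntegrableOn (fun z => frobCd (r z ξ)) (ball (0 : EdE d) 1) := by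
  have hmeas : AEStronglyMeasurable (fun z => frobCd (r z ξ))
      (volume.restrict (ball (0 : EdE d) 1)) := by
    apply Real.continuous_sqrt.comp_aestronglyMeasurable
    apply Finset.aestronglyMeasurable_fun_sum
    intro i _
    apply Finset.aestronglyMeasurable_fun_sum
    intro j _
    have h1 : AEStronglyMeasurable (fun z => ‖r z ξ i j‖)
        (volume.restrict (ball (0 : EdE d) 1)) :=
      ((hr_int ξ i j).aestronglyMeasurable.restrict).norm
    exact h1.pow 2
  refine Integrable.mono' (g := fun z => ∑ i, ∑ j, ‖r z ξ i j‖) ?_ hmeas ?_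
  · apply integrable_finset_sum
    intro i _
    apply integrable_finset_sum
    intro j _
    exact ((hr_int ξ i j).norm).integrableOn
  · refine Filter.Eventually.of_forall fun z => ?_
    have h0 : 0 ≤ frobCd (r z ξ) := Real.sqrt_nonneg _
    rw [Real.norm_of_nonneg h0]
    exact frobCd_le_sum _

-- entrywise L1 bound on r
lemma r_entry_int_le {m C₂ : ℝ} (r : EdE d → EdE d → Matrix (Fin d) (Fin d) ℂ)
    (hr_int : ∀ ξ i j, Integrable (fun z => r z ξ i j))
    (hr_bd : ∀ ξ : EdE d, 1 < ‖ξ‖ →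
      (∫ z in ball (0 : EdE d) 1, frobCd (r z ξ)) ≤ C₂ * ‖ξ‖ ^ (-(m + 1)))
    (ξ : EdE d) (hξ : 1 < ‖ξ‖) (i j : Fin d) :
    (∫ z in ball (0 : EdE d) 1, ‖r z ξ i j‖) ≤ C₂ * ‖ξ‖ ^ (-(m + 1)) := by
  refine le_trans ?_ (hr_bd ξ hξ)
  refine setIntegral_mono_on ((hr_int ξ i j).norm.integrableOn)
    (frob_r_integrableOn r hr_int ξ) measurableSet_ball fun z _ => ?_
  exact abs_entry_le_frobCd _ i j

lemma norm_myexp (t : ℝ) : ‖Complex.exp (-Complex.I * (t : ℂ))‖ = 1 := by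
  rw [abs_myexp]

lemma outerC_neg_neg (x : EdE d) : outerC (-x) (-x) = outerC x x := by
  ext a b
  simp [outerC]

lemma norm_outerC {x : EdE d} (hx : ‖x‖ = 1) : ‖outerC x x‖ = 1 := by
  have hx2 : ∑ i, x i ^ 2 = 1 := by
    have h := EuclideanSpace.norm_eq x
    rw [hx] at h
    have h2 : ∑ i, ‖x i‖ ^ 2 = 1 := Real.sqrt_eq_one.mp h.symm
    simpa [Real.norm_eq_abs, sq_abs] using h2
  rw [Matrix.frobenius_norm_def]
  have hentry : ∀ i j : Fin d, ‖outerC x x i j‖ ^ (2 : ℝ) = x i ^ 2 * x j ^ 2 := by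
    intro i j
    rw [Real.rpow_two]
    simp [outerC, map_mul, Complex.norm_real, Real.norm_eq_abs, mul_pow, sq_abs]
  simp_rw [hentry]
  rw [← Finset.sum_mul_sum, hx2, one_mul, Real.one_rpow]

lemma abs_matHatD_le (σ : EdE d → Matrix (Fin d) (Fin d) ℝ) (γ : EdE d) (i j : Fin d) :
    ‖matHatD σ γ i j‖ ≤ ∫ z, |σ z i j| := by
  refine le_trans (norm_integral_le_integral_norm _) (le_of_eq ?_)
  simp only [norm_mul, norm_myexp, mul_one, Complex.norm_real,
    Real.norm_eq_abs]

lemma abs_rIntD_le (r : EdE d → EdE d → Matrix (Fin d) (Fin d) ℂ) (ξ γ : EdE d) (i j : Fin d) :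
    ‖rIntD r ξ γ i j‖ ≤ ∫ z in ball (0 : EdE d) 1, ‖r z ξ i j‖ := by
  refine le_trans (norm_integral_le_integral_norm _) (le_of_eq ?_)
  simp only [norm_mul, norm_myexp, mul_one]

lemma outer_single_mul (i₀ : Fin d) (M : Matrix (Fin d) (Fin d) ℂ) :
    outerC (EuclideanSpace.single i₀ (1 : ℝ)) (EuclideanSpace.single i₀ (1 : ℝ)) * M *
      outerC (EuclideanSpace.single i₀ (1 : ℝ)) (EuclideanSpace.single i₀ (1 : ℝ)) =
      M i₀ i₀ • outerC (EuclideanSpace.single i₀ (1 : ℝ)) (EuclideanSpace.single i₀ (1 : ℝ)) := by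
  ext a b
  simp [outerC, Matrix.mul_apply, EuclideanSpace.single_apply, apply_ite Complex.ofReal,
    ite_mul, mul_ite, Finset.sum_ite_eq, Finset.sum_ite_eq', mul_comm, mul_left_comm]

lemma frob_smul_outer_single (i₀ : Fin d) (c : ℂ) :
    frobCd (c • outerC (EuclideanSpace.single i₀ (1 : ℝ)) (EuclideanSpace.single i₀ (1 : ℝ))) =
      ‖c‖ := by
  rw [frobCd]
  have hentry : ∀ a b : Fin d,
      ‖(c • outerC (EuclideanSpace.single i₀ (1 : ℝ))
          (EuclideanSpace.single i₀ (1 : ℝ))) a b‖ ^ 2 =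
        (if a = i₀ then (1 : ℝ) else 0) * ((if b = i₀ then (1 : ℝ) else 0) *
          ‖c‖ ^ 2) := by
    intro a b
    by_cases ha : a = i₀ <;> by_cases hb : b = i₀ <;>
      simp [outerC, EuclideanSpace.single_apply, ha, hb]
  simp_rw [hentry]
  simp [Finset.sum_ite_eq]


lemma frobCd_combination_le {s₁ s₂ KA KB : ℝ} (hs₁ : 0 ≤ s₁) (hs₂ : 0 ≤ s₂)
    (A B : Matrix (Fin d) (Fin d) ℂ) {x y : EdE d} (hx : ‖x‖ = 1) (hy : ‖y‖ = 1)
    (hA : frobCd A ≤ KA) (hB : frobCd B ≤ KB) :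
    frobCd (((s₁ : ℝ) : ℂ) • (outerC x x * A * outerC y y) +
        ((s₂ : ℝ) : ℂ) • (outerC x x * B * outerC y y)) ≤ s₁ * KA + s₂ * KB := by
  rw [frobCd_eq_norm]
  refine le_trans (norm_add_le _ _) ?_
  rw [norm_smul, norm_smul]
  have hs₁n : ‖((s₁ : ℝ) : ℂ)‖ = s₁ := by
    rw [Complex.norm_real, Real.norm_eq_abs, abs_of_nonneg hs₁]
  have hs₂n : ‖((s₂ : ℝ) : ℂ)‖ = s₂ := by
    rw [Complex.norm_real, Real.norm_eq_abs, abs_of_nonneg hs₂]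
  rw [hs₁n, hs₂n]
  have hmulA : ‖outerC x x * A * outerC y y‖ ≤ KA := by
    refine le_trans (Matrix.frobenius_norm_mul _ _) ?_
    refine le_trans (mul_le_mul_of_nonneg_right (Matrix.frobenius_norm_mul _ _)
      (norm_nonneg _)) ?_
    rw [norm_outerC hx, norm_outerC hy, one_mul, mul_one]
    rw [← frobCd_eq_norm]; exact hA
  have hmulB : ‖outerC x x * B * outerC y y‖ ≤ KB := by
    refine le_trans (Matrix.frobenius_norm_mul _ _) ?_
    refine le_trans (mul_le_mul_of_nonneg_right (Matrix.frobenius_norm_mul _ _)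
      (norm_nonneg _)) ?_
    rw [norm_outerC hx, norm_outerC hy, one_mul, mul_one]
    rw [← frobCd_eq_norm]; exact hB
  exact add_le_add (mul_le_mul_of_nonneg_left hmulA hs₁)
    (mul_le_mul_of_nonneg_left hmulB hs₂)


end Aux

/-- For every `k > 0` with `k_p = c_p k > 1`, the elastic correlation
data admits the lower bound
`M_EL(k) ≥ (|β_d|² c_p^{d+2−m}/d) k^{d−3−m} ‖Tr σ‖_{L¹(B₁)} − C₂ |β_d|² c_p^{d+1−m} k^{d−4−m}`. -/
theorem statement9 (d : ℕ) (hd : d = 2 ∨ d = 3) (m C₂ μ lam : ℝ)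
    (hm : (d : ℝ) - 2 < m ∧ m ≤ (d : ℝ)) (hC₂ : 0 < C₂) (hμ : 0 < μ) (hlam : 0 < lam + μ)
    (cp cs : ℝ) (hcp : cp = (lam + 2 * μ) ^ (-(1 / 2 : ℝ))) (hcs : cs = μ ^ (-(1 / 2 : ℝ)))
    (σ : EdE d → Matrix (Fin d) (Fin d) ℝ)
    (hσ_int : ∀ i j, Integrable (fun z => σ z i j))
    (hσ_supp : ∀ z ∉ Metric.ball (0 : EdE d) 1, σ z = 0)
    (hσ_psd : ∀ z, (σ z).IsSymm ∧ (σ z).PosSemidef)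
    (r : EdE d → EdE d → Matrix (Fin d) (Fin d) ℂ)
    (hr_int : ∀ ξ i j, Integrable (fun z => r z ξ i j))
    (hr_supp : ∀ ξ : EdE d, ∀ z ∉ Metric.ball (0 : EdE d) 1, r z ξ = 0)
    (hr_bd : ∀ ξ : EdE d, 1 < ‖ξ‖ →
      (∫ z in Metric.ball (0 : EdE d) 1, frobCd (r z ξ)) ≤ C₂ * ‖ξ‖ ^ (-(m + 1)))
    (k : ℝ) (hk : 0 < k) (hkp : 1 < cp * k) :
    betaSq d * cp ^ ((d : ℝ) + 2 - m) / (d : ℝ) * k ^ ((d : ℝ) - 3 - m) *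
        (∫ z in Metric.ball (0 : EdE d) 1, (σ z).trace) -
      C₂ * betaSq d * cp ^ ((d : ℝ) + 1 - m) * k ^ ((d : ℝ) - 4 - m) ≤
      MEL d m cp cs σ r k := by
  have hbeta : 0 ≤ betaSq d := by
    unfold betaSq
    split <;> positivity
  have hbase : 0 < lam + 2 * μ := by linarith
  have hcp0 : 0 < cp := hcp ▸ Real.rpow_pos_of_pos hbase _
  have hck : 0 < cp * k := mul_pos hcp0 hk
  have hd0 : 0 < d := by rcases hd with h | h <;> simp [h]
  have hd2 : (2 : ℝ) ≤ (d : ℝ) := by rcases hd with h | h <;> simp [h]; norm_num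
  have hm0 : 0 < m := lt_of_le_of_lt (by linarith) hm.1
  haveI : NeZero d := ⟨hd0.ne'⟩
  -- scalars
  set s₁ : ℝ := cp ^ ((d : ℝ) + 2 - m) * k ^ ((d : ℝ) - 3 - m) with hs₁def
  set s₂ : ℝ := cp ^ ((d : ℝ) + 2) * k ^ ((d : ℝ) - 3) with hs₂def
  have hs₁0 : 0 ≤ s₁ := mul_nonneg (Real.rpow_nonneg hcp0.le _) (Real.rpow_nonneg hk.le _)
  have hs₂0 : 0 ≤ s₂ := mul_nonneg (Real.rpow_nonneg hcp0.le _) (Real.rpow_nonneg hk.le _)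
  -- constants bounding the σ and r contributions
  set Kσ : ℝ := ∑ i, ∑ j, ∫ z, |σ z i j| with hKσdef
  set Kr : ℝ := (d : ℝ) * ((d : ℝ) * C₂) with hKrdef
  have hmatHat_bd : ∀ γ : EdE d, frobCd (matHatD σ γ) ≤ Kσ := fun γ =>
    le_trans (frobCd_le_sum _) (Finset.sum_le_sum fun i _ =>
      Finset.sum_le_sum fun j _ => abs_matHatD_le σ γ i j)
  have hrInt_bd : ∀ ξ γ : EdE d, 1 < ‖ξ‖ → frobCd (rIntD r ξ γ) ≤ Kr := by
    intro ξ γ hξ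
    refine le_trans (frobCd_le_sum _) ?_
    have hentry : ∀ i j : Fin d, ‖rIntD r ξ γ i j‖ ≤ C₂ := by
      intro i j
      refine le_trans (abs_rIntD_le r ξ γ i j)
        (le_trans (r_entry_int_le r hr_int hr_bd ξ hξ i j) ?_)
      have h1 : ‖ξ‖ ^ (-(m + 1)) ≤ 1 :=
        Real.rpow_le_one_of_one_le_of_nonpos hξ.le (by linarith)
      calc C₂ * ‖ξ‖ ^ (-(m + 1)) ≤ C₂ * 1 := mul_le_mul_of_nonneg_left h1 hC₂.le
        _ = C₂ := mul_one _
    calc ∑ i, ∑ j, ‖rIntD r ξ γ i j‖ ≤ ∑ _i : Fin d, ∑ _j : Fin d, C₂ :=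
          Finset.sum_le_sum fun i _ => Finset.sum_le_sum fun j _ => hentry i j
      _ = Kr := by simp [hKrdef, Finset.sum_const, Finset.card_univ, nsmul_eq_mul]
  -- boundedness of the Fp values
  have hbdd : BddAbove
      {v : ℝ | ∃ x y : EdE d, ‖x‖ = 1 ∧ ‖y‖ = 1 ∧ v = Fp d m cp σ r k x y} := by
    refine ⟨betaSq d * (s₁ * Kσ + s₂ * Kr), ?_⟩
    rintro v ⟨x, y, hx, hy, rfl⟩
    rw [Fp]
    refine mul_le_mul_of_nonneg_left ?_ hbeta
    have hξn : 1 < ‖-((cp * k) • y)‖ := by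
      rw [norm_neg, norm_smul, hy, mul_one, Real.norm_eq_abs, abs_of_pos hck]
      exact hkp
    exact frobCd_combination_le hs₁0 hs₂0 _ _ hx hy
      (hmatHat_bd ((cp * k) • (x + y))) (hrInt_bd _ ((cp * k) • (x + y)) hξn)
  -- choice of the diagonal entry
  have hdiag_int : ∀ i : Fin d, IntegrableOn (fun z => σ z i i) (Metric.ball (0 : EdE d) 1) :=
    fun i => (hσ_int i i).integrableOn
  have hfull : ∀ i j : Fin d,
      (∫ z in Metric.ball (0 : EdE d) 1, σ z i j) = ∫ z, σ z i j := fun i j =>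
    setIntegral_eq_integral_of_forall_compl_eq_zero fun z hz => by
      rw [hσ_supp z hz]; rfl
  have htrace : (∫ z in Metric.ball (0 : EdE d) 1, (σ z).trace) =
      ∑ i, ∫ z in Metric.ball (0 : EdE d) 1, σ z i i := by
    simp_rw [Matrix.trace, Matrix.diag]
    exact integral_finset_sum _ fun i _ => hdiag_int i
  obtain ⟨i₀, -, hi₀⟩ : ∃ i ∈ Finset.univ,
      (∫ z in Metric.ball (0 : EdE d) 1, (σ z).trace) / (d : ℝ) ≤ ∫ z, σ z i i := by
    apply Finset.exists_le_of_sum_le Finset.univ_nonempty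
    rw [Finset.sum_const, Finset.card_univ, Fintype.card_fin, nsmul_eq_mul,
      mul_div_cancel₀ _ (by exact_mod_cast hd0.ne' : (d : ℝ) ≠ 0), htrace]
    exact le_of_eq (Finset.sum_congr rfl fun i _ => hfull i i)
  set e : EdE d := EuclideanSpace.single i₀ (1 : ℝ) with hedef
  have he : ‖e‖ = 1 := by rw [hedef, EuclideanSpace.norm_single, norm_one]
  have hξe : 1 < ‖(cp * k) • e‖ := by
    rw [norm_smul, he, mul_one, Real.norm_eq_abs, abs_of_pos hck]; exact hkp
  -- value of Fp at (e, -e)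
  have hM0 : matHatD σ 0 i₀ i₀ = ((∫ z, σ z i₀ i₀ : ℝ) : ℂ) := by
    rw [matHatD]
    simp only [Matrix.of_apply, inner_zero_left, Complex.ofReal_zero, mul_zero,
      Complex.exp_zero, mul_one]
    exact integral_ofReal
  have hR0 : rIntD r ((cp * k) • e) 0 i₀ i₀ =
      ∫ z in Metric.ball (0 : EdE d) 1, r z ((cp * k) • e) i₀ i₀ := by
    rw [rIntD]
    simp only [Matrix.of_apply, inner_zero_left, Complex.ofReal_zero, mul_zero,
      Complex.exp_zero, mul_one]
  have hFp : Fp d m cp σ r k e (-e) = betaSq d * ‖((s₁ : ℝ) : ℂ) * matHatD σ 0 i₀ i₀ +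
        ((s₂ : ℝ) : ℂ) * rIntD r ((cp * k) • e) 0 i₀ i₀‖ := by
    rw [Fp]
    congr 1
    have h0 : e + -e = (0 : EdE d) := add_neg_cancel e
    rw [outerC_neg_neg, h0, smul_zero, show -((cp * k) • (-e)) = (cp * k) • e by
      rw [smul_neg, neg_neg], outer_single_mul, outer_single_mul, smul_smul, smul_smul,
      ← add_smul, frob_smul_outer_single]
  -- lower bound on the Fp value
  set T : ℝ := ∫ z, σ z i₀ i₀ with hTdef
  have hT0 : 0 ≤ T := integral_nonneg fun z => psd_diag (hσ_psd z).2 i₀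
  have habsA : ‖((s₁ : ℝ) : ℂ) * matHatD σ 0 i₀ i₀‖ = s₁ * T := by
    rw [hM0, ← Complex.ofReal_mul, Complex.norm_real, Real.norm_eq_abs,
      abs_of_nonneg (mul_nonneg hs₁0 hT0)]
  have habsB : ‖((s₂ : ℝ) : ℂ) * rIntD r ((cp * k) • e) 0 i₀ i₀‖ ≤
      s₂ * (C₂ * (cp * k) ^ (-(m + 1))) := by
    rw [norm_mul, Complex.norm_real, Real.norm_eq_abs, abs_of_nonneg hs₂0]
    refine mul_le_mul_of_nonneg_left ?_ hs₂0
    rw [hR0]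
    refine le_trans (norm_integral_le_integral_norm _) ?_
    have := r_entry_int_le r hr_int hr_bd ((cp * k) • e) hξe i₀ i₀
    rwa [norm_smul, he, mul_one, Real.norm_eq_abs, abs_of_pos hck] at this
  have htri : s₁ * T - s₂ * (C₂ * (cp * k) ^ (-(m + 1))) ≤ ‖((s₁ : ℝ) : ℂ) * matHatD σ 0 i₀ i₀ +
        ((s₂ : ℝ) : ℂ) * rIntD r ((cp * k) • e) 0 i₀ i₀‖ := by
    have h := norm_sub_norm_le (((s₁ : ℝ) : ℂ) * matHatD σ 0 i₀ i₀)
      (-(((s₂ : ℝ) : ℂ) * rIntD r ((cp * k) • e) 0 i₀ i₀))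
    rw [norm_neg, sub_neg_eq_add] at h
    calc s₁ * T - s₂ * (C₂ * (cp * k) ^ (-(m + 1)))
        ≤ ‖((s₁ : ℝ) : ℂ) * matHatD σ 0 i₀ i₀‖ -
          ‖((s₂ : ℝ) : ℂ) * rIntD r ((cp * k) • e) 0 i₀ i₀‖ := by
          rw [habsA]; linarith [habsB]
      _ ≤ _ := h
  -- membership and conclusion
  have hmem : Fp d m cp σ r k e (-e) ∈
      {v : ℝ | ∃ x y : EdE d, ‖x‖ = 1 ∧ ‖y‖ = 1 ∧ v = Fp d m cp σ r k x y} :=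
    ⟨e, -e, he, by rw [norm_neg]; exact he, rfl⟩
  have hMEL : Fp d m cp σ r k e (-e) ≤ MEL d m cp cs σ r k :=
    le_trans (le_csSup hbdd hmem) (le_max_left _ _)
  -- final arithmetic
  have hexp : s₂ * (C₂ * (cp * k) ^ (-(m + 1))) =
      C₂ * (cp ^ ((d : ℝ) + 1 - m) * k ^ ((d : ℝ) - 4 - m)) := by
    rw [hs₂def, Real.mul_rpow hcp0.le hk.le]
    have h1 : cp ^ ((d : ℝ) + 2) * cp ^ (-(m + 1)) = cp ^ ((d : ℝ) + 1 - m) := by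
      rw [← Real.rpow_add hcp0]; ring_nf
    have h2 : k ^ ((d : ℝ) - 3) * k ^ (-(m + 1)) = k ^ ((d : ℝ) - 4 - m) := by
      rw [← Real.rpow_add hk]; ring_nf
    calc cp ^ ((d : ℝ) + 2) * k ^ ((d : ℝ) - 3) * (C₂ * (cp ^ (-(m + 1)) * k ^ (-(m + 1))))
        = C₂ * ((cp ^ ((d : ℝ) + 2) * cp ^ (-(m + 1))) * (k ^ ((d : ℝ) - 3) * k ^ (-(m + 1)))) := by
          ring
      _ = _ := by rw [h1, h2]
  set Itr : ℝ := ∫ z in Metric.ball (0 : EdE d) 1, (σ z).trace with hItrdef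
  have hE1 : betaSq d * cp ^ ((d : ℝ) + 2 - m) / (d : ℝ) * k ^ ((d : ℝ) - 3 - m) * Itr =
      betaSq d * (s₁ * (Itr / (d : ℝ))) := by
    rw [hs₁def]; ring
  calc betaSq d * cp ^ ((d : ℝ) + 2 - m) / (d : ℝ) * k ^ ((d : ℝ) - 3 - m) * Itr -
        C₂ * betaSq d * cp ^ ((d : ℝ) + 1 - m) * k ^ ((d : ℝ) - 4 - m)
      = betaSq d * (s₁ * (Itr / (d : ℝ))) -
        betaSq d * (s₂ * (C₂ * (cp * k) ^ (-(m + 1)))) := by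
        rw [hE1, hexp]; ring
    _ ≤ betaSq d * (s₁ * T) - betaSq d * (s₂ * (C₂ * (cp * k) ^ (-(m + 1)))) := by
        have := mul_le_mul_of_nonneg_left hi₀ hs₁0
        have h2 := mul_le_mul_of_nonneg_left
          (mul_le_mul_of_nonneg_left hi₀ hs₁0) hbeta
        linarith
    _ = betaSq d * (s₁ * T - s₂ * (C₂ * (cp * k) ^ (-(m + 1)))) := by ring
    _ ≤ Fp d m cp σ r k e (-e) := by
        rw [hFp]
        exact mul_le_mul_of_nonneg_left htri hbeta
    _ ≤ MEL d m cp cs σ r k := hMEL
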